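/- Let ν be a σ-finite measure on (0,∞) and f : (0,∞) → [0,∞) a measurable function. Define p_t(x) = (2πt)^{−1/2} e^{−x²/(2t)} for t > 0, x ∈ ℝ, and set μ_A(x) = ∫_0^∞ f(t) p_t(x) ν(dt) and μ_B(x) = ∫_0^∞ p_t(x) ν(dt) (values in [0,∞]). Then ∫_ℝ ( √(μ_A(x)) − √(μ_B(x)) )² dx ≤ ∫_0^∞ ( √(f(t)) − 1 )² ν(dt), both sides interpreted in [0,∞]. (Absolute continuity of the subordinators, in the sense of Sato's Hellinger-type criterion, implies the corresponding criterion for the Lévy densities of the subordinated Brownian motions.) -/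

import Mathlib

open MeasureTheory Real Set
open scoped ENNReal

lemma gauss_lintegral (t : ℝ) (ht : 0 < t) :
    ∫⁻ x : ℝ, ENNReal.ofReal ((2 * π * t) ^ (-(1/2:ℝ)) * Real.exp (-x^2/(2*t))) = 1 := by
  have h2t : 0 < 2 * π * t := by positivity
  have hc : 0 < (2 * π * t) ^ (-(1/2:ℝ)) := Real.rpow_pos_of_pos h2t _
  have hb : 0 < 1/(2*t) := by positivity
  have hexp : ∀ x : ℝ, -x^2/(2*t) = -(1/(2*t)) * x^2 := by intro x; field_simp
  have hint : Integrable (fun x : ℝ => Real.exp (-(1/(2*t)) * x^2)) := integrable_exp_neg_mul_sq hb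
  have hval : ∫ x : ℝ, Real.exp (-(1/(2*t)) * x^2) = Real.sqrt (π / (1/(2*t))) :=
    integral_gaussian _
  have hmeas : Measurable fun x : ℝ => Real.exp (-x^2/(2*t)) := by fun_prop
  calc ∫⁻ x : ℝ, ENNReal.ofReal ((2 * π * t) ^ (-(1/2:ℝ)) * Real.exp (-x^2/(2*t)))
      = ∫⁻ x : ℝ, ENNReal.ofReal ((2 * π * t) ^ (-(1/2:ℝ))) *
          ENNReal.ofReal (Real.exp (-x^2/(2*t))) := by
        simp_rw [ENNReal.ofReal_mul hc.le]
    _ = ENNReal.ofReal ((2 * π * t) ^ (-(1/2:ℝ))) *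
          ∫⁻ x : ℝ, ENNReal.ofReal (Real.exp (-x^2/(2*t))) :=
        lintegral_const_mul _ (ENNReal.measurable_ofReal.comp hmeas)
    _ = ENNReal.ofReal ((2 * π * t) ^ (-(1/2:ℝ))) *
          ENNReal.ofReal (Real.sqrt (π / (1/(2*t)))) := by
        congr 1
        simp_rw [hexp]
        rw [← ofReal_integral_eq_lintegral_ofReal hint (ae_of_all _ fun x => (Real.exp_pos _).le),
          hval]
    _ = 1 := by
        rw [← ENNReal.ofReal_mul hc.le]
        have : π / (1/(2*t)) = 2 * π * t := by field_simp
        rw [this, Real.sqrt_eq_rpow, ← Real.rpow_add h2t]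
        norm_num

lemma pointwise_bound (ν : Measure ℝ) (f : ℝ → ℝ) (hf : Measurable f) (hf0 : ∀ t, 0 ≤ f t)
    (x : ℝ) :
    (max ((∫⁻ t in Ioi (0:ℝ),
                ENNReal.ofReal (f t * ((2 * π * t) ^ (-(1/2:ℝ)) * Real.exp (-x^2/(2*t)))) ∂ν)
                ^ (1/2 : ℝ) -
              (∫⁻ t in Ioi (0:ℝ),
                ENNReal.ofReal ((2 * π * t) ^ (-(1/2:ℝ)) * Real.exp (-x^2/(2*t))) ∂ν)
                ^ (1/2 : ℝ))
            ((∫⁻ t in Ioi (0:ℝ),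
                ENNReal.ofReal ((2 * π * t) ^ (-(1/2:ℝ)) * Real.exp (-x^2/(2*t))) ∂ν)
                ^ (1/2 : ℝ) -
              (∫⁻ t in Ioi (0:ℝ),
                ENNReal.ofReal (f t * ((2 * π * t) ^ (-(1/2:ℝ)) * Real.exp (-x^2/(2*t)))) ∂ν)
                ^ (1/2 : ℝ))) ^ 2 ≤
      ∫⁻ t in Ioi (0:ℝ),
        ENNReal.ofReal ((Real.sqrt (f t) - 1)^2 *
          ((2 * π * t) ^ (-(1/2:ℝ)) * Real.exp (-x^2/(2*t)))) ∂ν := by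
  set P : ℝ → ℝ := fun t => (2 * π * t) ^ (-(1/2:ℝ)) * Real.exp (-x^2/(2*t)) with hPdef
  have hPmeas : Measurable P := by fun_prop
  have hPpos : ∀ t ∈ Ioi (0:ℝ), 0 ≤ P t := by
    intro t ht
    have : (0:ℝ) < 2 * π * t := by have := ht.out; positivity
    positivity
  set u : ℝ → ℝ≥0∞ := fun t => ENNReal.ofReal (Real.sqrt (f t) * Real.sqrt (P t)) with hu
  set v : ℝ → ℝ≥0∞ := fun t => ENNReal.ofReal (Real.sqrt (P t)) with hv
  set w : ℝ → ℝ≥0∞ := fun t => ENNReal.ofReal (|Real.sqrt (f t) - 1| * Real.sqrt (P t)) with hw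
  have hum : Measurable u := by fun_prop
  have hvm : Measurable v := by fun_prop
  have hwm : Measurable w := by fun_prop
  set μ : Measure ℝ := ν.restrict (Ioi 0) with hμ
  have hA : (∫⁻ t in Ioi (0:ℝ), ENNReal.ofReal (f t * P t) ∂ν) = ∫⁻ t, u t ^ (2:ℝ) ∂μ := by
    refine setLIntegral_congr_fun measurableSet_Ioi (fun t ht => ?_)
    rw [hu]
    rw [ENNReal.ofReal_rpow_of_nonneg (by positivity) (by norm_num)]
    congr 1
    rw [Real.rpow_two, mul_pow, Real.sq_sqrt (hf0 t), Real.sq_sqrt (hPpos t ht)]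
  have hB : (∫⁻ t in Ioi (0:ℝ), ENNReal.ofReal (P t) ∂ν) = ∫⁻ t, v t ^ (2:ℝ) ∂μ := by
    refine setLIntegral_congr_fun measurableSet_Ioi (fun t ht => ?_)
    rw [hv, ENNReal.ofReal_rpow_of_nonneg (Real.sqrt_nonneg _) (by norm_num)]
    congr 1
    rw [Real.rpow_two, Real.sq_sqrt (hPpos t ht)]
  have hD : (∫⁻ t in Ioi (0:ℝ), ENNReal.ofReal ((Real.sqrt (f t) - 1)^2 * P t) ∂ν)
      = ∫⁻ t, w t ^ (2:ℝ) ∂μ := by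
    refine setLIntegral_congr_fun measurableSet_Ioi (fun t ht => ?_)
    rw [hw, ENNReal.ofReal_rpow_of_nonneg (by positivity) (by norm_num)]
    congr 1
    rw [Real.rpow_two, mul_pow, sq_abs, Real.sq_sqrt (hPpos t ht)]
  have huwv : ∀ t, u t ≤ w t + v t := by
    intro t
    rw [hu, hv, hw, ← ENNReal.ofReal_add (by positivity) (Real.sqrt_nonneg _)]
    refine ENNReal.ofReal_le_ofReal ?_
    have h1 : Real.sqrt (f t) ≤ |Real.sqrt (f t) - 1| + 1 := by
      have := le_abs_self (Real.sqrt (f t) - 1); linarith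
    nlinarith [Real.sqrt_nonneg (P t), Real.sqrt_nonneg (f t), abs_nonneg (Real.sqrt (f t) - 1)]
  have hvwu : ∀ t, v t ≤ w t + u t := by
    intro t
    rw [hu, hv, hw, ← ENNReal.ofReal_add (by positivity) (by positivity)]
    refine ENNReal.ofReal_le_ofReal ?_
    have h1 : (1:ℝ) ≤ |Real.sqrt (f t) - 1| + Real.sqrt (f t) := by
      have := neg_abs_le (Real.sqrt (f t) - 1); linarith
    nlinarith [Real.sqrt_nonneg (P t), Real.sqrt_nonneg (f t), abs_nonneg (Real.sqrt (f t) - 1)]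
  have mink1 : (∫⁻ t, u t ^ (2:ℝ) ∂μ) ^ (1/2:ℝ) ≤
      (∫⁻ t, w t ^ (2:ℝ) ∂μ) ^ (1/2:ℝ) + (∫⁻ t, v t ^ (2:ℝ) ∂μ) ^ (1/2:ℝ) := by
    refine le_trans ?_ (ENNReal.lintegral_Lp_add_le hwm.aemeasurable hvm.aemeasurable one_le_two)
    exact ENNReal.rpow_le_rpow
      (lintegral_mono fun t => ENNReal.rpow_le_rpow (huwv t) (by norm_num)) (by norm_num)
  have mink2 : (∫⁻ t, v t ^ (2:ℝ) ∂μ) ^ (1/2:ℝ) ≤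
      (∫⁻ t, w t ^ (2:ℝ) ∂μ) ^ (1/2:ℝ) + (∫⁻ t, u t ^ (2:ℝ) ∂μ) ^ (1/2:ℝ) := by
    refine le_trans ?_ (ENNReal.lintegral_Lp_add_le hwm.aemeasurable hum.aemeasurable one_le_two)
    exact ENNReal.rpow_le_rpow
      (lintegral_mono fun t => ENNReal.rpow_le_rpow (hvwu t) (by norm_num)) (by norm_num)
  have hmax : max ((∫⁻ t, u t ^ (2:ℝ) ∂μ) ^ (1/2:ℝ) - (∫⁻ t, v t ^ (2:ℝ) ∂μ) ^ (1/2:ℝ))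
      ((∫⁻ t, v t ^ (2:ℝ) ∂μ) ^ (1/2:ℝ) - (∫⁻ t, u t ^ (2:ℝ) ∂μ) ^ (1/2:ℝ))
      ≤ (∫⁻ t, w t ^ (2:ℝ) ∂μ) ^ (1/2:ℝ) := by
    refine max_le (tsub_le_iff_right.mpr mink1) (tsub_le_iff_right.mpr mink2)
  calc (max _ _) ^ 2 ≤ ((∫⁻ t, w t ^ (2:ℝ) ∂μ) ^ (1/2:ℝ)) ^ 2 := by
        rw [hA, hB]; exact pow_le_pow_left₀ zero_le hmax 2
    _ = ∫⁻ t, w t ^ (2:ℝ) ∂μ := by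
        rw [← ENNReal.rpow_natCast ((∫⁻ t, w t ^ (2:ℝ) ∂μ) ^ (1/2:ℝ)) 2, ← ENNReal.rpow_mul]
        norm_num
    _ = _ := hD.symm

theorem hellinger_subordination_inequality (ν : Measure ℝ) [SigmaFinite ν]
    (f : ℝ → ℝ) (hf : Measurable f) (hf0 : ∀ t, 0 ≤ f t) :
    (∫⁻ x : ℝ,
        (max ((∫⁻ t in Ioi (0:ℝ),
                ENNReal.ofReal (f t * ((2 * π * t) ^ (-(1/2:ℝ)) * Real.exp (-x^2/(2*t)))) ∂ν)
                ^ (1/2 : ℝ) -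
              (∫⁻ t in Ioi (0:ℝ),
                ENNReal.ofReal ((2 * π * t) ^ (-(1/2:ℝ)) * Real.exp (-x^2/(2*t))) ∂ν)
                ^ (1/2 : ℝ))
            ((∫⁻ t in Ioi (0:ℝ),
                ENNReal.ofReal ((2 * π * t) ^ (-(1/2:ℝ)) * Real.exp (-x^2/(2*t))) ∂ν)
                ^ (1/2 : ℝ) -
              (∫⁻ t in Ioi (0:ℝ),
                ENNReal.ofReal (f t * ((2 * π * t) ^ (-(1/2:ℝ)) * Real.exp (-x^2/(2*t)))) ∂ν)
                ^ (1/2 : ℝ))) ^ 2) ≤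
      ∫⁻ t in Ioi (0:ℝ), ENNReal.ofReal ((Real.sqrt (f t) - 1)^2) ∂ν := by
  refine le_trans (lintegral_mono fun x => pointwise_bound ν f hf hf0 x) (le_of_eq ?_)
  have hK : AEMeasurable (Function.uncurry fun (x t : ℝ) =>
      ENNReal.ofReal ((Real.sqrt (f t) - 1)^2 *
        ((2 * π * t) ^ (-(1/2:ℝ)) * Real.exp (-x^2/(2*t)))))
      ((volume : Measure ℝ).prod (ν.restrict (Ioi 0))) := by
    apply Measurable.aemeasurable
    apply ENNReal.measurable_ofReal.comp
    fun_prop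
  rw [lintegral_lintegral_swap hK]
  refine setLIntegral_congr_fun measurableSet_Ioi (fun t ht => ?_)
  simp_rw [ENNReal.ofReal_mul (sq_nonneg _)]
  rw [lintegral_const_mul' _ _ ENNReal.ofReal_ne_top, gauss_lintegral t ht, mul_one]
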